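/- Let ξ_n > 0 and η_n > 0 be sequences with ξ_n η_n → 0 and n^{1/2} η_n → ∞, and let k_n be integers with 1 ≤ k_n < n such that n − k_n is eventually constant equal to m. Suppose θ_n ∈ ℝ and σ_n ∈ (0,∞) satisfy θ_n/(σ_n ξ_n η_n) → ζ in the extended real line. For each n let Z_n have law N(θ_n, σ_n²ξ_n²/n), let S_n be independent of Z_n with density ρ_{n−k_n}, and let μ_n be the law of σ_n^{−1}(ξ_n η_n)^{−1}(θ̃_{S,n} − θ_n) where θ̃_{S,n} = sign(Z_n)(|Z_n| − σ_n S_n ξ_n η_n)_+ with (·)_+ = max(·, 0). Then: if ζ ∈ ℝ, μ_n converges weakly to the measure (∫_{|ζ|}^∞ ρ_m(s) ds)·δ_{−ζ} + λ, where λ has Lebesgue density x ↦ ρ_m(x)·1(x + ζ < 0) + ρ_m(−x)·1(x + ζ > 0); if ζ = +∞ (respectively ζ = −∞), μ_n converges weakly to the measure with Lebesgue density x ↦ ρ_m(−x) (respectively x ↦ ρ_m(x)). -/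

import Mathlib

open MeasureTheory ProbabilityTheory Filter Set

/-- Standard normal cdf. -/
noncomputable def Phi (x : ℝ) : ℝ :=
  ∫ t in Iic x, (Real.sqrt (2 * Real.pi))⁻¹ * Real.exp (-t ^ 2 / 2)

/-- Standard normal pdf. -/
noncomputable def stdPhi (t : ℝ) : ℝ :=
  (Real.sqrt (2 * Real.pi))⁻¹ * Real.exp (-t ^ 2 / 2)

/-- Extension of `Phi` to the extended reals, with `PhiE ⊤ = 1` and `PhiE ⊥ = 0`. -/
noncomputable def PhiE (z : EReal) : ℝ :=
  if z = ⊤ then 1 else if z = ⊥ then 0 else Phi z.toReal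

/-- Density of `m^{-1/2}` times the square root of a chi-square with `m` degrees of freedom. -/
noncomputable def rho (m : ℕ) (s : ℝ) : ℝ :=
  if 0 < s then
    (2 : ℝ) ^ ((1 : ℝ) - (m : ℝ) / 2) * (Real.Gamma ((m : ℝ) / 2))⁻¹ * Real.sqrt m *
      ((m : ℝ) * s ^ 2) ^ (((m : ℝ) - 1) / 2) * Real.exp (-(m : ℝ) * s ^ 2 / 2)
  else 0

/-- Joint law of the least-squares coordinate `Z ~ N(θ, σ²ξ²/n)` and the independent
variance-estimator ratio `S` with density `rho m`. -/
noncomputable def jointMeas (n m : ℕ) (ξ θ σ : ℝ) : Measure (ℝ × ℝ) :=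
  (gaussianReal θ (Real.toNNReal (σ ^ 2 * ξ ^ 2 / n))).prod
    (volume.withDensity fun s => ENNReal.ofReal (rho m s))

/-- Feasible hard-thresholding estimator `Z · 1(|Z| > σSξη)`. -/
noncomputable def hardF (σ ξ η : ℝ) (p : ℝ × ℝ) : ℝ :=
  if σ * p.2 * ξ * η < |p.1| then p.1 else 0

/-- Feasible soft-thresholding estimator `sign(Z)(|Z| − σSξη)₊`. -/
noncomputable def softF (σ ξ η : ℝ) (p : ℝ × ℝ) : ℝ :=
  Real.sign p.1 * max (|p.1| - σ * p.2 * ξ * η) 0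

/-- Feasible adaptive soft-thresholding estimator `Z(1 − σ²S²ξ²η²/Z²)₊`. -/
noncomputable def adaptF (σ ξ η : ℝ) (p : ℝ × ℝ) : ℝ :=
  if p.1 = 0 then 0 else p.1 * max (1 - (σ * p.2 * ξ * η) ^ 2 / p.1 ^ 2) 0

/-- Weak convergence of a sequence of Borel measures on `ℝ`: integrals of every bounded
continuous function converge. -/
def WeakConv (μ : ℕ → Measure ℝ) (ν : Measure ℝ) : Prop :=
  ∀ f : ℝ → ℝ, Continuous f → (∃ C : ℝ, ∀ x, |f x| ≤ C) →
    Tendsto (fun n => ∫ x, f x ∂(μ n)) atTop (nhds (∫ x, f x ∂ν))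

section AUX
open MeasureTheory ProbabilityTheory Filter Set
open scoped NNReal ENNReal

lemma rho_nonneg (m : ℕ) (s : ℝ) : 0 ≤ rho m s := by
  unfold rho
  split
  · have h1 : (0:ℝ) ≤ (Real.Gamma ((m : ℝ) / 2))⁻¹ :=
      inv_nonneg.2 (Real.Gamma_nonneg_of_nonneg (by positivity))
    positivity
  · exact le_refl 0

lemma rho_of_nonpos (m : ℕ) {s : ℝ} (hs : s ≤ 0) : rho m s = 0 := by
  unfold rho; rw [if_neg (not_lt.2 hs)]

lemma measurable_rho (m : ℕ) : Measurable (rho m) := by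
  unfold rho
  refine Measurable.ite (measurableSet_lt measurable_const measurable_id) ?_ measurable_const
  fun_prop

lemma measurable_realSign : Measurable Real.sign := by
  unfold Real.sign
  exact Measurable.ite (measurableSet_lt measurable_id measurable_const) measurable_const
    (Measurable.ite (measurableSet_lt measurable_const measurable_id) measurable_const
      measurable_const)

lemma realSign_const_mul {a : ℝ} (ha : 0 < a) (x : ℝ) : Real.sign (a * x) = Real.sign x := by
  rcases lt_trichotomy x 0 with h | h | h
  · rw [Real.sign_of_neg h, Real.sign_of_neg (mul_neg_of_pos_of_neg ha h)]
  · simp [h, Real.sign_zero]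
  · rw [Real.sign_of_pos h, Real.sign_of_pos (mul_pos ha h)]

lemma rho_zero (s : ℝ) : rho 0 s = 0 := by
  unfold rho
  split <;> simp

lemma integrable_rho (m : ℕ) : Integrable (rho m) := by
  rcases Nat.eq_zero_or_pos m with hm | hm
  · subst hm
    simpa [funext (rho_zero)] using integrable_zero ℝ ℝ (volume : Measure ℝ)
  have hb : (0:ℝ) < (m : ℝ) / 2 := by positivity
  have hs : (-1 : ℝ) < (m : ℝ) - 1 := by
    have : (1:ℝ) ≤ (m:ℝ) := by exact_mod_cast hm
    linarith
  set K : ℝ := (2 : ℝ) ^ ((1 : ℝ) - (m : ℝ) / 2) * (Real.Gamma ((m : ℝ) / 2))⁻¹ *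
      Real.sqrt m * (m : ℝ) ^ (((m : ℝ) - 1) / 2) with hK
  have heq : ∀ s ∈ Ioi (0:ℝ), rho m s
      = K * (s ^ ((m:ℝ) - 1) * Real.exp (-((m:ℝ)/2) * s ^ 2)) := by
    intro s hs0
    rw [mem_Ioi] at hs0
    unfold rho
    rw [if_pos hs0]
    have h1 : ((m : ℝ) * s ^ 2) ^ (((m : ℝ) - 1) / 2)
        = (m : ℝ) ^ (((m : ℝ) - 1) / 2) * s ^ ((m:ℝ) - 1) := by
      rw [Real.mul_rpow (by positivity) (by positivity)]
      congr 1
      rw [← Real.rpow_natCast s 2, ← Real.rpow_mul hs0.le]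
      congr 1
      ring
    have h2 : -(m : ℝ) * s ^ 2 / 2 = -((m:ℝ)/2) * s ^ 2 := by ring
    rw [h1, h2, hK]; ring
  have hI : IntegrableOn (fun s : ℝ => K * (s ^ ((m:ℝ) - 1) * Real.exp (-((m:ℝ)/2) * s ^ 2)))
      (Ioi 0) := (integrableOn_rpow_mul_exp_neg_mul_sq hb hs).const_mul K
  have hIr : IntegrableOn (rho m) (Ioi 0) := hI.congr_fun (fun s hs => (heq s hs).symm)
    measurableSet_Ioi
  have : rho m = Set.indicator (Ioi 0) (rho m) := by
    funext s
    rcases le_or_gt s 0 with h | h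
    · rw [rho_of_nonpos m h, Set.indicator_of_notMem (by simpa using h)]
    · rw [Set.indicator_of_mem (mem_Ioi.2 h)]
  rw [this]
  exact (integrable_indicator_iff measurableSet_Ioi).2 hIr

lemma integrable_rho_neg (m : ℕ) : Integrable (fun x : ℝ => rho m (-x)) :=
  ((Measure.measurePreserving_neg (volume : Measure ℝ)).integrable_comp
    ((measurable_rho m).aestronglyMeasurable)).2 (integrable_rho m)

/-- the law of the variance-estimator ratio. -/
noncomputable def Qm (m : ℕ) : Measure ℝ := volume.withDensity fun s => ENNReal.ofReal (rho m s)

instance Qm_finite (m : ℕ) : IsFiniteMeasure (Qm m) :=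
  isFiniteMeasure_withDensity_ofReal (integrable_rho m).2

lemma integral_withDensity_rho (w : ℝ → ℝ) (hw : Measurable w) (h0 : ∀ x, 0 ≤ w x) (f : ℝ → ℝ) :
    ∫ x, f x ∂(volume.withDensity fun x => ENNReal.ofReal (w x)) = ∫ x, w x * f x := by
  have h : ∫ x, f x ∂(volume.withDensity fun x => ((Real.toNNReal (w x) : ℝ≥0) : ℝ≥0∞))
      = ∫ x, (Real.toNNReal (w x) : ℝ≥0) • f x :=
    integral_withDensity_eq_integral_smul (hw.real_toNNReal) f
  simp [NNReal.smul_def, Real.coe_toNNReal _ (h0 _)] at h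
  exact h

lemma integral_Qm (m : ℕ) (f : ℝ → ℝ) : ∫ x, f x ∂(Qm m) = ∫ x, rho m x * f x :=
  integral_withDensity_rho (rho m) (measurable_rho m) (rho_nonneg m) f

lemma Qm_ae (m : ℕ) (a : ℝ) : ∀ᵐ s ∂(Qm m), 0 < s ∧ s ≠ a := by
  rw [ae_iff]
  have hsub : {s : ℝ | ¬(0 < s ∧ s ≠ a)} ⊆ Iic 0 ∪ {a} := by
    intro s hs; simp only [Set.mem_setOf_eq, not_and_or, not_lt, not_ne_iff] at hs
    rcases hs with h | h
    · exact Or.inl h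
    · exact Or.inr h
  refine measure_mono_null hsub ?_
  refine le_antisymm ?_ (by positivity)
  calc Qm m (Iic 0 ∪ {a}) ≤ Qm m (Iic 0) + Qm m {a} := measure_union_le _ _
    _ = 0 := by
      unfold Qm
      rw [withDensity_apply _ measurableSet_Iic, withDensity_apply _ (measurableSet_singleton a)]
      have h1 : ∫⁻ s in Iic (0:ℝ), ENNReal.ofReal (rho m s) = 0 := by
        rw [setLIntegral_congr_fun measurableSet_Iic
          (fun s (hs : s ≤ 0) => show ENNReal.ofReal (rho m s) = ENNReal.ofReal 0 by rw [rho_of_nonpos m hs])]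
        simp
      have h2 : ∫⁻ s in ({a} : Set ℝ), ENNReal.ofReal (rho m s) = 0 :=
        setLIntegral_measure_zero _ _ (measure_singleton a)
      rw [h1, h2, add_zero]

/-- the scaled and centered soft-thresholding statistic as a function of the
standardized gaussian `g` and the scale `s`. -/
noncomputable def psi (t ε g s : ℝ) : ℝ :=
  Real.sign (t + ε * g) * max (|t + ε * g| - s) 0 - t

lemma measurable_psi (t ε : ℝ) : Measurable (fun p : ℝ × ℝ => psi t ε p.1 p.2) := by
  unfold psi
  exact ((measurable_realSign.comp (measurable_const.add (measurable_fst.const_mul ε))).mul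
    (((measurable_const.add (measurable_fst.const_mul ε)).abs.sub measurable_snd).max
      measurable_const)).sub measurable_const

lemma psi_conv_real (ζr : ℝ) {t ε : ℕ → ℝ} (ht : Tendsto t atTop (nhds ζr))
    (hε : Tendsto ε atTop (nhds 0)) (g : ℝ) {s : ℝ} (hs : 0 < s) (hne : s ≠ |ζr|) :
    Tendsto (fun n => psi (t n) (ε n) g s) atTop
      (nhds (if |ζr| < s then -ζr else -(Real.sign ζr * s))) := by
  have hw : Tendsto (fun n => t n + ε n * g) atTop (nhds ζr) := by
    have h := ht.add (hε.mul_const g)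
    simpa using h
  rcases hne.lt_or_gt with h | h
  · rw [if_neg (not_lt.2 h.le)]
    have hζ0 : ζr ≠ 0 := by
      intro h0; rw [h0, abs_zero] at h; exact absurd h (not_lt.2 hs.le)
    rcases hζ0.lt_or_gt with hneg | hpos
    · have hev : ∀ᶠ n in atTop, t n + ε n * g < 0 := hw.eventually_lt_const hneg
      have hlim : Tendsto (fun n => -1 * max (-(t n + ε n * g) - s) 0 - t n) atTop
          (nhds (-1 * max (-ζr - s) 0 - ζr)) :=
        ((((hw.neg.sub_const s).max tendsto_const_nhds).const_mul (-1)).sub ht)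
      have habs : |ζr| = -ζr := abs_of_neg hneg
      have hmax : max (-ζr - s) 0 = -ζr - s := max_eq_left (by rw [habs] at h; linarith)
      have heq : -1 * max (-ζr - s) 0 - ζr = -(Real.sign ζr * s) := by
        rw [hmax, Real.sign_of_neg hneg]; ring
      rw [heq] at hlim
      refine Tendsto.congr' ?_ hlim
      filter_upwards [hev] with n hn
      unfold psi
      rw [Real.sign_of_neg hn, abs_of_neg hn]
    · have hev : ∀ᶠ n in atTop, 0 < t n + ε n * g := hw.eventually_const_lt hpos
      have hlim : Tendsto (fun n => 1 * max ((t n + ε n * g) - s) 0 - t n) atTop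
          (nhds (1 * max (ζr - s) 0 - ζr)) :=
        ((((hw.sub_const s).max tendsto_const_nhds).const_mul 1).sub ht)
      have habs : |ζr| = ζr := abs_of_pos hpos
      have hmax : max (ζr - s) 0 = ζr - s := max_eq_left (by rw [habs] at h; linarith)
      have heq : 1 * max (ζr - s) 0 - ζr = -(Real.sign ζr * s) := by
        rw [hmax, Real.sign_of_pos hpos]; ring
      rw [heq] at hlim
      refine Tendsto.congr' ?_ hlim
      filter_upwards [hev] with n hn
      unfold psi
      rw [Real.sign_of_pos hn, abs_of_pos hn]
  · rw [if_pos h]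
    have hev : ∀ᶠ n in atTop, |t n + ε n * g| < s := hw.abs.eventually_lt_const h
    refine Tendsto.congr' ?_ ht.neg
    filter_upwards [hev] with n hn
    unfold psi
    rw [max_eq_right (by linarith), mul_zero, zero_sub]

lemma psi_conv_top {t ε : ℕ → ℝ} (ht : Tendsto t atTop atTop)
    (hε : Tendsto ε atTop (nhds 0)) (g s : ℝ) :
    Tendsto (fun n => psi (t n) (ε n) g s) atTop (nhds (-s)) := by
  have hw : Tendsto (fun n => t n + ε n * g) atTop atTop :=
    ht.atTop_add (hε.mul_const g)
  have hev : ∀ᶠ n in atTop, max s 0 < t n + ε n * g := hw.eventually_gt_atTop _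
  have hlim : Tendsto (fun n => ε n * g - s) atTop (nhds (-s)) := by
    have h := (hε.mul_const g).sub_const s
    simpa using h
  refine Tendsto.congr' ?_ hlim
  filter_upwards [hev] with n hn
  have h0 : 0 < t n + ε n * g := lt_of_le_of_lt (le_max_right s 0) hn
  have h1 : s < t n + ε n * g := lt_of_le_of_lt (le_max_left s 0) hn
  unfold psi
  rw [Real.sign_of_pos h0, abs_of_pos h0, max_eq_left (by linarith)]
  ring

lemma psi_conv_bot {t ε : ℕ → ℝ} (ht : Tendsto t atTop atBot)
    (hε : Tendsto ε atTop (nhds 0)) (g s : ℝ) :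
    Tendsto (fun n => psi (t n) (ε n) g s) atTop (nhds s) := by
  have hw : Tendsto (fun n => t n + ε n * g) atTop atBot :=
    ht.atBot_add (hε.mul_const g)
  have hev : ∀ᶠ n in atTop, t n + ε n * g < min (-s) 0 := hw.eventually_lt_atBot _
  have hlim : Tendsto (fun n => ε n * g + s) atTop (nhds s) := by
    have h := (hε.mul_const g).add_const s
    simpa using h
  refine Tendsto.congr' ?_ hlim
  filter_upwards [hev] with n hn
  have h0 : t n + ε n * g < 0 := lt_of_lt_of_le hn (min_le_right _ _)
  have h1 : t n + ε n * g < -s := lt_of_lt_of_le hn (min_le_left _ _)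
  unfold psi
  rw [Real.sign_of_neg h0, abs_of_neg h0, max_eq_left (by linarith)]
  ring

end AUX
section AUX2
open MeasureTheory ProbabilityTheory Filter Set
open scoped NNReal ENNReal

lemma measurable_softF_map (σ ξ η θ : ℝ) :
    Measurable (fun p : ℝ × ℝ => σ⁻¹ * (ξ * η)⁻¹ * (softF σ ξ η p - θ)) := by
  unfold softF
  exact (((measurable_realSign.comp measurable_fst).mul
    ((measurable_fst.abs.sub ((((measurable_snd.const_mul σ).mul_const ξ).mul_const η))).max
      measurable_const)).sub measurable_const).const_mul _

lemma gauss_shift {n : ℕ} (hn : 1 ≤ n) {ξ σ : ℝ} (hξ : 0 < ξ) (hσ : 0 < σ) (θ : ℝ) :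
    Measure.map (fun g : ℝ => θ + (σ * ξ / Real.sqrt n) * g) (gaussianReal 0 1)
      = gaussianReal θ (Real.toNNReal (σ ^ 2 * ξ ^ 2 / n)) := by
  have hnpos : (0:ℝ) < n := by exact_mod_cast hn
  set c : ℝ := σ * ξ / Real.sqrt n with hc
  have hc2 : c ^ 2 = σ ^ 2 * ξ ^ 2 / n := by
    rw [hc, div_pow, Real.sq_sqrt hnpos.le]
    ring
  have h1 : Measure.map (fun g : ℝ => c * g) (gaussianReal 0 1)
      = gaussianReal 0 (Real.toNNReal (σ ^ 2 * ξ ^ 2 / n)) := by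
    have h0 := gaussianReal_map_const_mul (μ := 0) (v := 1) c
    rw [mul_zero] at h0
    have hvv : Real.toNNReal (σ ^ 2 * ξ ^ 2 / n) = (⟨c ^ 2, sq_nonneg c⟩ * 1 : ℝ≥0) := by
      rw [← hc2]
      exact (Real.toNNReal_of_nonneg (sq_nonneg c)).trans (mul_one _).symm
    rw [hvv]
    exact h0
  have h2 : (fun g : ℝ => θ + c * g) = (fun x : ℝ => θ + x) ∘ (fun g : ℝ => c * g) := rfl
  rw [h2, ← Measure.map_map (measurable_const_add θ) (measurable_const_mul c), h1,
    gaussianReal_map_const_add θ, zero_add]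

lemma key_integral (n mm : ℕ) (hn : 1 ≤ n) {ξ η θ σ : ℝ} (hξ : 0 < ξ) (hη : 0 < η)
    (hσ : 0 < σ) (f : ℝ → ℝ) (hf : Continuous f) :
    ∫ x, f x ∂(Measure.map (fun p : ℝ × ℝ => σ⁻¹ * (ξ * η)⁻¹ * (softF σ ξ η p - θ))
        (jointMeas n mm ξ θ σ))
    = ∫ p : ℝ × ℝ, f (psi (θ / (σ * ξ * η)) ((Real.sqrt n * η)⁻¹) p.1 p.2)
        ∂((gaussianReal 0 1).prod (Qm mm)) := by
  have hnpos : (0:ℝ) < n := by exact_mod_cast hn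
  have hsn : (0:ℝ) < Real.sqrt n := Real.sqrt_pos.2 hnpos
  set T : ℝ × ℝ → ℝ := fun p => σ⁻¹ * (ξ * η)⁻¹ * (softF σ ξ η p - θ) with hT
  have hTm : Measurable T := measurable_softF_map σ ξ η θ
  set A : ℝ → ℝ := fun g => θ + (σ * ξ / Real.sqrt n) * g with hA
  have hAm : Measurable A := measurable_const_add θ |>.comp (measurable_const_mul _) |> fun h => h
  have hprod : jointMeas n mm ξ θ σ
      = Measure.map (Prod.map A id) ((gaussianReal 0 1).prod (Qm mm)) := by
    rw [← Measure.map_prod_map _ _ hAm measurable_id, Measure.map_id,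
      gauss_shift hn hξ hσ θ]
    rfl
  rw [integral_map hTm.aemeasurable hf.aestronglyMeasurable, hprod,
    integral_map (φ := Prod.map A id) (f := fun x => f (T x))
      ((hAm.prodMap measurable_id).aemeasurable)
      (hf.measurable.comp hTm).aestronglyMeasurable]
  refine integral_congr_ae (Filter.Eventually.of_forall fun p => ?_)
  have ha : (0:ℝ) < σ * ξ * η := by positivity
  have softF_eval : ∀ z s : ℝ, softF σ ξ η (z, s) = Real.sign z * max (|z| - σ * s * ξ * η) 0 :=
    fun _ _ => rfl
  have key : T (A p.1, p.2) = psi (θ / (σ * ξ * η)) ((Real.sqrt n * η)⁻¹) p.1 p.2 := by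
    set w : ℝ := θ / (σ * ξ * η) + (Real.sqrt n * η)⁻¹ * p.1 with hwdef
    have hz : A p.1 = (σ * ξ * η) * w := by
      rw [hwdef, hA]
      field_simp
    have hmax : max (σ * ξ * η * |w| - σ * p.2 * ξ * η) 0
        = (σ * ξ * η) * max (|w| - p.2) 0 := by
      rw [mul_max_of_nonneg _ _ ha.le, mul_zero]
      ring_nf
    show σ⁻¹ * (ξ * η)⁻¹ * (softF σ ξ η (A p.1, p.2) - θ)
      = Real.sign w * max (|w| - p.2) 0 - θ / (σ * ξ * η)
    rw [hz, softF_eval, realSign_const_mul ha, abs_mul, abs_of_pos ha, hmax]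
    generalize max (|w| - p.2) 0 = M
    generalize Real.sign w = S
    field_simp
  exact congrArg f key

lemma integral_prod_snd (mm : ℕ) (h : ℝ → ℝ) (hh : Measurable h) :
    ∫ p : ℝ × ℝ, h p.2 ∂((gaussianReal (0:ℝ) 1).prod (Qm mm)) = ∫ s, h s ∂(Qm mm) := by
  have hmap : Measure.map Prod.snd ((gaussianReal (0:ℝ) 1).prod (Qm mm)) = Qm mm := by
    rw [Measure.map_snd_prod, measure_univ, one_smul]
  have h2 := integral_map (μ := (gaussianReal (0:ℝ) 1).prod (Qm mm)) (φ := Prod.snd)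
    measurable_snd.aemeasurable (f := h) (by rw [hmap]; exact hh.aestronglyMeasurable)
  rw [hmap] at h2
  exact h2.symm

lemma ae_prod_snd (mm : ℕ) {P : ℝ → Prop} (hP : MeasurableSet {s | P s})
    (h : ∀ᵐ s ∂(Qm mm), P s) :
    ∀ᵐ p ∂((gaussianReal (0:ℝ) 1).prod (Qm mm)), P p.2 := by
  have hmap : Measure.map Prod.snd ((gaussianReal (0:ℝ) 1).prod (Qm mm)) = Qm mm := by
    rw [Measure.map_snd_prod, measure_univ, one_smul]
  rw [← hmap] at h
  exact (ae_map_iff measurable_snd.aemeasurable hP).1 h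

lemma master (mm : ℕ) (t ε : ℕ → ℝ) (F : ℝ × ℝ → ℝ)
    (hconv : ∀ᵐ p ∂((gaussianReal (0:ℝ) 1).prod (Qm mm)),
      Tendsto (fun n => psi (t n) (ε n) p.1 p.2) atTop (nhds (F p)))
    (f : ℝ → ℝ) (hf : Continuous f) (C : ℝ) (hC : ∀ x, |f x| ≤ C) :
    Tendsto (fun n => ∫ p : ℝ × ℝ, f (psi (t n) (ε n) p.1 p.2)
        ∂((gaussianReal (0:ℝ) 1).prod (Qm mm)))
      atTop (nhds (∫ p : ℝ × ℝ, f (F p) ∂((gaussianReal (0:ℝ) 1).prod (Qm mm)))) := by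
  refine tendsto_integral_of_dominated_convergence (fun _ => C) ?_ (integrable_const C) ?_ ?_
  · intro n
    exact (hf.measurable.comp (measurable_psi (t n) (ε n))).aestronglyMeasurable
  · intro n
    exact Filter.Eventually.of_forall fun p => by rw [Real.norm_eq_abs]; exact hC _
  · filter_upwards [hconv] with p hp using (hf.tendsto _).comp hp

end AUX2

/-- consistent tuning, weak limits of the law of the scaled and centered
feasible soft-thresholding estimator when `n - k_n` is eventually constant equal to `m`. -/
theorem stmt_18 (ξ η : ℕ → ℝ) (hξ : ∀ n, 0 < ξ n) (hη : ∀ n, 0 < η n)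
    (hxe : Tendsto (fun n : ℕ => ξ n * η n) atTop (nhds 0))
    (hne : Tendsto (fun n : ℕ => Real.sqrt n * η n) atTop atTop)
    (k : ℕ → ℕ) (hk : ∀ n, 2 ≤ n → 1 ≤ k n ∧ k n < n)
    (m : ℕ) (hm : ∀ᶠ n in atTop, n - k n = m)
    (θ σ : ℕ → ℝ) (hσ : ∀ n, 0 < σ n)
    (ζ : EReal)
    (hζ : Tendsto (fun n : ℕ => ((θ n / (σ n * ξ n * η n) : ℝ) : EReal)) atTop (nhds ζ))
    (μ : ℕ → Measure ℝ)
    (hμ : ∀ n : ℕ, μ n =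
      Measure.map
        (fun p : ℝ × ℝ => (σ n)⁻¹ * (ξ n * η n)⁻¹ * (softF (σ n) (ξ n) (η n) p - θ n))
        (jointMeas n (n - k n) (ξ n) (θ n) (σ n))) :
    (∀ ζr : ℝ, ζ = (ζr : EReal) →
        WeakConv μ
          (ENNReal.ofReal (∫ s in Ioi |ζr|, rho m s) • Measure.dirac (-ζr) +
            volume.withDensity fun x : ℝ =>
              ENNReal.ofReal
                (rho m x * (if x + ζr < 0 then 1 else 0) +
                  rho m (-x) * (if 0 < x + ζr then 1 else 0)))) ∧
    (ζ = ⊤ → WeakConv μ (volume.withDensity fun x : ℝ => ENNReal.ofReal (rho m (-x)))) ∧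
    (ζ = ⊥ → WeakConv μ (volume.withDensity fun x : ℝ => ENNReal.ofReal (rho m x))) := by
  classical
  set t : ℕ → ℝ := fun n => θ n / (σ n * ξ n * η n) with htdef
  set ε : ℕ → ℝ := fun n => (Real.sqrt n * η n)⁻¹ with hεdef
  have hε : Tendsto ε atTop (nhds 0) := hne.inv_tendsto_atTop
  have hkey : ∀ f : ℝ → ℝ, Continuous f → ∀ᶠ n in atTop,
      ∫ x, f x ∂(μ n) = ∫ p : ℝ × ℝ, f (psi (t n) (ε n) p.1 p.2)
        ∂((gaussianReal (0:ℝ) 1).prod (Qm m)) := by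
    intro f hf
    filter_upwards [hm, eventually_ge_atTop 2] with n h1 h2
    rw [hμ n, h1]
    exact key_integral n m (by omega) (hξ n) (hη n) (hσ n) f hf
  refine ⟨?_, ?_, ?_⟩
  · -- real case
    intro ζr hzr f hf hbdd
    obtain ⟨C, hC⟩ := hbdd
    subst hzr
    have ht : Tendsto t atTop (nhds ζr) := EReal.tendsto_coe.1 hζ
    set φ : ℝ → ℝ := fun s => if |ζr| < s then -ζr else -(Real.sign ζr * s) with hφdef
    have hφm : Measurable φ :=
      Measurable.ite (measurableSet_lt measurable_const measurable_id) measurable_const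
        ((measurable_id.const_mul (Real.sign ζr)).neg)
    have hPmeas : MeasurableSet {s : ℝ | 0 < s ∧ s ≠ |ζr|} := by
      have : {s : ℝ | 0 < s ∧ s ≠ |ζr|} = Ioi 0 ∩ ({|ζr|} : Set ℝ)ᶜ := by
        ext s; simp [mem_Ioi]
      rw [this]
      exact measurableSet_Ioi.inter (measurableSet_singleton _).compl
    have hconv : ∀ᵐ p ∂((gaussianReal (0:ℝ) 1).prod (Qm m)),
        Tendsto (fun n => psi (t n) (ε n) p.1 p.2) atTop (nhds ((fun p : ℝ × ℝ => φ p.2) p)) := by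
      filter_upwards [ae_prod_snd m hPmeas (Qm_ae m |ζr|)] with p hp
      exact psi_conv_real ζr ht hε p.1 hp.1 hp.2
    have hlim := master m t ε (fun p => φ p.2) hconv f hf C hC
    set c : ℝ := ∫ s in Ioi |ζr|, rho m s with hcdef
    set dd : ℝ → ℝ := fun x => rho m x * (if x + ζr < 0 then 1 else 0) +
        rho m (-x) * (if 0 < x + ζr then 1 else 0) with hdddef
    have hC0 : 0 ≤ C := le_trans (abs_nonneg (f 0)) (hC 0)
    have hc0 : 0 ≤ c := setIntegral_nonneg measurableSet_Ioi (fun s _ => rho_nonneg m s)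
    have hddm : Measurable dd := by
      refine Measurable.add ?_ ?_
      · exact (measurable_rho m).mul (Measurable.ite
          (measurableSet_lt (measurable_id.add_const ζr) measurable_const)
          measurable_const measurable_const)
      · exact ((measurable_rho m).comp measurable_neg).mul (Measurable.ite
          (measurableSet_lt measurable_const (measurable_id.add_const ζr))
          measurable_const measurable_const)
    have hddnn : ∀ x, 0 ≤ dd x := by
      intro x
      refine add_nonneg (mul_nonneg (rho_nonneg m x) ?_) (mul_nonneg (rho_nonneg m (-x)) ?_) <;>
        · split <;> norm_num
    have hddle : ∀ x, dd x ≤ rho m x + rho m (-x) := by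
      intro x
      refine add_le_add ?_ ?_ <;>
        exact mul_le_of_le_one_right (rho_nonneg m _) (by split <;> norm_num)
    -- step A
    have hstepA : ∫ p : ℝ × ℝ, f (φ p.2) ∂((gaussianReal (0:ℝ) 1).prod (Qm m))
        = ∫ s, rho m s * f (φ s) := by
      rw [integral_prod_snd m (fun s => f (φ s)) (hf.measurable.comp hφm), integral_Qm]
    -- step B
    have hfd : Integrable f (Measure.dirac (-ζr)) :=
      Integrable.mono' (integrable_const C) hf.aestronglyMeasurable
        (Filter.Eventually.of_forall fun x => by rw [Real.norm_eq_abs]; exact hC x)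
    have hfw : Integrable f (volume.withDensity fun x => ENNReal.ofReal (dd x)) := by
      rw [integrable_withDensity_iff hddm.ennreal_ofReal
        (Filter.Eventually.of_forall fun x => ENNReal.ofReal_lt_top)]
      have heq : (fun x => f x * (ENNReal.ofReal (dd x)).toReal) = fun x => f x * dd x :=
        funext fun x => by rw [ENNReal.toReal_ofReal (hddnn x)]
      rw [heq]
      refine Integrable.mono' (((integrable_rho m).add (integrable_rho_neg m)).const_mul C)
        (hf.measurable.mul hddm).aestronglyMeasurable
        (Filter.Eventually.of_forall fun x => ?_)
      rw [Real.norm_eq_abs, abs_mul, abs_of_nonneg (hddnn x)]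
      exact mul_le_mul (hC x) (hddle x) (hddnn x) hC0
    have hstepB : ∫ x, f x ∂(ENNReal.ofReal c • Measure.dirac (-ζr) +
          volume.withDensity fun x => ENNReal.ofReal (dd x))
        = c * f (-ζr) + ∫ x, dd x * f x := by
      rw [integral_add_measure (hfd.smul_measure ENNReal.ofReal_ne_top) hfw,
        integral_smul_measure, integral_dirac, ENNReal.toReal_ofReal hc0, smul_eq_mul,
        integral_withDensity_rho dd hddm hddnn f]
    -- step C
    have hGm : Measurable fun s => rho m s * f (φ s) :=
      (measurable_rho m).mul (hf.measurable.comp hφm)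
    have hGint : Integrable fun s => rho m s * f (φ s) := by
      refine Integrable.mono' ((integrable_rho m).const_mul C) hGm.aestronglyMeasurable
        (Filter.Eventually.of_forall fun s => ?_)
      rw [Real.norm_eq_abs, abs_mul, abs_of_nonneg (rho_nonneg m s), mul_comm C (rho m s)]
      exact mul_le_mul_of_nonneg_left (hC _) (rho_nonneg m s)
    have hsplit : (∫ s in Iic |ζr|, rho m s * f (φ s)) + ∫ s in Ioi |ζr|, rho m s * f (φ s)
        = ∫ s, rho m s * f (φ s) :=
      intervalIntegral.integral_Iic_add_Ioi hGint.integrableOn hGint.integrableOn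
    have hIoi : ∫ s in Ioi |ζr|, rho m s * f (φ s) = c * f (-ζr) := by
      rw [setIntegral_congr_fun measurableSet_Ioi
        (fun s hs => show rho m s * f (φ s) = rho m s * f (-ζr) by
          simp only [hφdef]; rw [if_pos (mem_Ioi.1 hs)])]
      rw [hcdef, ← integral_mul_const]
    have hIic : ∫ s in Iic |ζr|, rho m s * f (φ s)
        = ∫ s in Iic |ζr|, rho m s * f (-(Real.sign ζr * s)) :=
      setIntegral_congr_fun measurableSet_Iic
        (fun s hs => by simp only [hφdef]; rw [if_neg (not_lt.2 (mem_Iic.1 hs))])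
    have hJ : ∫ x, dd x * f x = ∫ s in Iic |ζr|, rho m s * f (-(Real.sign ζr * s)) := by
      rcases lt_trichotomy ζr 0 with hζneg | hζ0 | hζpos
      · have habs : |ζr| = -ζr := abs_of_neg hζneg
        have h1 : ∀ x, dd x * f x
            = Set.indicator (Iio (-ζr)) (fun x => rho m x * f x) x := by
          intro x
          have h2 : rho m (-x) * (if 0 < x + ζr then 1 else 0) = 0 := by
            rcases le_or_gt 0 x with h | h
            · rw [rho_of_nonpos m (by linarith : -x ≤ (0:ℝ))]; ring
            · rw [if_neg (by linarith : ¬ (0:ℝ) < x + ζr), mul_zero]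
          simp only [hdddef]
          rw [h2, add_zero]
          rcases lt_or_ge x (-ζr) with h | h
          · rw [if_pos (by linarith : x + ζr < 0), Set.indicator_of_mem (by exact h)]
            ring
          · rw [if_neg (by linarith : ¬ x + ζr < 0), Set.indicator_of_notMem
              (by simpa using h)]
            ring
        rw [integral_congr_ae (Filter.Eventually.of_forall h1),
          integral_indicator measurableSet_Iio,
          setIntegral_congr_set Iio_ae_eq_Iic, habs]
        refine setIntegral_congr_fun measurableSet_Iic fun s hs => ?_
        rw [Real.sign_of_neg hζneg]
        norm_num
      · subst hζ0
        have hL : ∀ x, dd x * f x = 0 := by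
          intro x
          simp only [hdddef]
          rcases lt_trichotomy x 0 with h | h | h
          · rw [rho_of_nonpos m h.le,
              if_neg (show ¬ (0:ℝ) < x + 0 by rw [add_zero]; exact not_lt.2 h.le)]
            ring
          · rw [h]
            simp [rho_of_nonpos m (le_refl (0:ℝ))]
          · rw [if_neg (show ¬ x + 0 < 0 by rw [add_zero]; exact not_lt.2 h.le),
              rho_of_nonpos m (by linarith : -x ≤ (0:ℝ))]
            ring
        rw [integral_congr_ae (Filter.Eventually.of_forall hL), integral_zero]
        rw [abs_zero]
        rw [setIntegral_congr_fun measurableSet_Iic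
          (fun s hs => show rho m s * f (-(Real.sign 0 * s)) = 0 by
            rw [rho_of_nonpos m hs]; ring)]
        simp
      · have habs : |ζr| = ζr := abs_of_pos hζpos
        have h1 : ∀ x, dd x * f x
            = Set.indicator (Ioi (-ζr)) (fun x => rho m (-x) * f x) x := by
          intro x
          have h2 : rho m x * (if x + ζr < 0 then 1 else 0) = 0 := by
            rcases le_or_gt x 0 with h | h
            · rw [rho_of_nonpos m h]; ring
            · rw [if_neg (by linarith : ¬ x + ζr < 0), mul_zero]
          simp only [hdddef]
          rw [h2, zero_add]
          rcases lt_or_ge (-ζr) x with h | h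
          · rw [if_pos (by linarith : (0:ℝ) < x + ζr), Set.indicator_of_mem (by exact h)]
            ring
          · rw [if_neg (by linarith : ¬ (0:ℝ) < x + ζr), Set.indicator_of_notMem
              (by simpa using h)]
            ring
        rw [integral_congr_ae (Filter.Eventually.of_forall h1),
          integral_indicator measurableSet_Ioi]
        have h5 : ∫ x in Ioi (-ζr), rho m (-x) * f x
            = ∫ y in Iic ζr, rho m y * f (-y) := by
          have h6 := integral_comp_neg_Ioi (c := -ζr) (fun y => rho m y * f (-y))
          simp only [neg_neg] at h6
          rw [← h6]
        rw [h5, habs]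
        refine setIntegral_congr_fun measurableSet_Iic fun s hs => ?_
        rw [Real.sign_of_pos hζpos]
        norm_num
    have hF : ∫ p : ℝ × ℝ, f (φ p.2) ∂((gaussianReal (0:ℝ) 1).prod (Qm m))
        = ∫ x, f x ∂(ENNReal.ofReal c • Measure.dirac (-ζr) +
          volume.withDensity fun x => ENNReal.ofReal (dd x)) := by
      rw [hstepA, hstepB, ← hsplit, hIoi, hIic, hJ]
      ring
    rw [← hF]
    refine Tendsto.congr' ?_ hlim
    filter_upwards [hkey f hf] with n h using h.symm
  · -- top case
    intro hz f hf hbdd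
    obtain ⟨C, hC⟩ := hbdd
    rw [hz] at hζ
    have ht : Tendsto t atTop atTop := by
      rw [EReal.tendsto_nhds_top_iff_real] at hζ
      rw [tendsto_atTop]
      intro b
      filter_upwards [hζ b] with n hn
      exact (EReal.coe_lt_coe_iff.1 hn).le
    have hconv : ∀ᵐ p ∂((gaussianReal (0:ℝ) 1).prod (Qm m)),
        Tendsto (fun n => psi (t n) (ε n) p.1 p.2) atTop
          (nhds ((fun p : ℝ × ℝ => -p.2) p)) :=
      Filter.Eventually.of_forall fun p => psi_conv_top ht hε p.1 p.2
    have hlim := master m t ε (fun p => -p.2) hconv f hf C hC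
    have hF : ∫ p : ℝ × ℝ, f (-p.2) ∂((gaussianReal (0:ℝ) 1).prod (Qm m))
        = ∫ x, f x ∂(volume.withDensity fun x : ℝ => ENNReal.ofReal (rho m (-x))) := by
      rw [integral_prod_snd m (fun s => f (-s)) (hf.measurable.comp measurable_neg),
        integral_Qm,
        integral_withDensity_rho (fun x => rho m (-x)) ((measurable_rho m).comp measurable_neg)
          (fun x => rho_nonneg m (-x)) f]
      have h := integral_neg_eq_self (fun x => rho m (-x) * f x) (volume : Measure ℝ)
      simp only [neg_neg] at h
      exact h
    rw [← hF]
    refine Tendsto.congr' ?_ hlim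
    filter_upwards [hkey f hf] with n h using h.symm
  · -- bot case
    intro hz f hf hbdd
    obtain ⟨C, hC⟩ := hbdd
    rw [hz] at hζ
    have ht : Tendsto t atTop atBot := by
      rw [EReal.tendsto_nhds_bot_iff_real] at hζ
      rw [tendsto_atBot]
      intro b
      filter_upwards [hζ b] with n hn
      exact (EReal.coe_lt_coe_iff.1 hn).le
    have hconv : ∀ᵐ p ∂((gaussianReal (0:ℝ) 1).prod (Qm m)),
        Tendsto (fun n => psi (t n) (ε n) p.1 p.2) atTop
          (nhds ((fun p : ℝ × ℝ => p.2) p)) :=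
      Filter.Eventually.of_forall fun p => psi_conv_bot ht hε p.1 p.2
    have hlim := master m t ε (fun p => p.2) hconv f hf C hC
    have hF : ∫ p : ℝ × ℝ, f p.2 ∂((gaussianReal (0:ℝ) 1).prod (Qm m))
        = ∫ x, f x ∂(volume.withDensity fun x : ℝ => ENNReal.ofReal (rho m x)) := by
      rw [integral_prod_snd m f hf.measurable, integral_Qm,
        integral_withDensity_rho (rho m) (measurable_rho m) (rho_nonneg m) f]
    rw [← hF]
    refine Tendsto.congr' ?_ hlim
    filter_upwards [hkey f hf] with n h using h.symm
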